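/- Let R be a UFD and B = [[e,f],[g,h]] ∈ M_2(R) with at least one of e−h, f, g nonzero. Let m = gcd(e−h, f, g). Then the centralizer of B in M_2(R) equals the set of matrices of the form m⁻¹·w·[[e−h,f],[g,0]] + v·E, where v, w range over those elements of R for which m divides w·(e−h), w·f, and w·g (equivalently, such that the matrix m⁻¹·w·B' has entries in R), and m⁻¹ denotes the inverse of m in the field of fractions of R. -/

import Mathlib

lemma dvd_of_cop {R : Type*} [CommRing R] [IsDomain R] [UniqueFactorizationMonoid R]
    (x y z t : R) (hcop : ∀ d : R, d ∣ x → d ∣ y → d ∣ z → IsUnit d)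
    (h1 : x ∣ y * t) (h2 : x ∣ z * t) : x ∣ t := by
  obtain ⟨inst⟩ : Nonempty (StrongNormalizedGCDMonoid R) :=
    ⟨@UniqueFactorizationMonoid.toStrongNormalizedGCDMonoid R _ _
      UniqueFactorizationMonoid.strongNormalizationMonoid⟩
  letI := inst
  have hx : x ∣ gcd (t * x) (gcd (t * y) (t * z)) :=
    dvd_gcd (dvd_mul_left x t) (dvd_gcd (by rwa [mul_comm]) (by rwa [mul_comm]))
  rw [gcd_mul_left, normalize_apply, mul_assoc, gcd_mul_left] at hx
  have hu : IsUnit (gcd x (↑(normUnit t) * gcd y z)) := by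
    apply hcop
    · exact gcd_dvd_left _ _
    · exact ((gcd_dvd_right _ _).trans (Units.mul_left_dvd.mpr (gcd_dvd_left y z)))
    · exact ((gcd_dvd_right _ _).trans (Units.mul_left_dvd.mpr (gcd_dvd_right y z)))
  have : normalize t * gcd x (↑(normUnit t) * gcd y z) ∣ t := by
    refine (hu.mul_right_dvd.mpr ?_ : _)
    exact (normalize_associated t).dvd
  exact hx.trans this

theorem stmt3 {R : Type*} [CommRing R] [IsDomain R] [UniqueFactorizationMonoid R]
    (e f g h m : R) (hne : e - h ≠ 0 ∨ f ≠ 0 ∨ g ≠ 0)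
    (hmdvd : m ∣ e - h ∧ m ∣ f ∧ m ∣ g)
    (hgcd : ∀ d : R, d ∣ e - h → d ∣ f → d ∣ g → d ∣ m) :
    {A : Matrix (Fin 2) (Fin 2) R | A * !![e, f; g, h] = !![e, f; g, h] * A} =
      {A : Matrix (Fin 2) (Fin 2) R | ∃ v w : R,
        m ∣ w * (e - h) ∧ m ∣ w * f ∧ m ∣ w * g ∧
        A.map (algebraMap R (FractionRing R)) =
          (algebraMap R (FractionRing R) m)⁻¹ •
            (algebraMap R (FractionRing R) w •
              !![algebraMap R (FractionRing R) (e - h), algebraMap R (FractionRing R) f;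
                 algebraMap R (FractionRing R) g, 0]) +
          algebraMap R (FractionRing R) v • (1 : Matrix (Fin 2) (Fin 2) (FractionRing R))} := by
  classical
  set K := FractionRing R
  set φ := algebraMap R K with hφ
  have φinj : Function.Injective φ := IsFractionRing.injective R K
  have hm0 : m ≠ 0 := by
    rintro rfl
    obtain ⟨h1, h2, h3⟩ := hmdvd
    rw [zero_dvd_iff] at h1 h2 h3
    rcases hne with hh | hh | hh <;> exact hh (by assumption)
  have hmK : φ m ≠ 0 := fun hh => hm0 (φinj (by simpa using hh))
  obtain ⟨e', he'⟩ := hmdvd.1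
  obtain ⟨f', hf'⟩ := hmdvd.2.1
  obtain ⟨g', hg'⟩ := hmdvd.2.2
  have hcop : ∀ d : R, d ∣ e' → d ∣ f' → d ∣ g' → IsUnit d := by
    intro d h1 h2 h3
    have : m * d ∣ m := hgcd (m * d) (he' ▸ mul_dvd_mul_left m h1)
      (hf' ▸ mul_dvd_mul_left m h2) (hg' ▸ mul_dvd_mul_left m h3)
    obtain ⟨k, hk⟩ := this
    have : d * k = 1 := by
      apply mul_left_cancel₀ hm0
      rw [mul_one, ← mul_assoc, ← hk]
    exact IsUnit.of_mul_eq_one k this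
  ext A
  simp only [Set.mem_setOf_eq]
  constructor
  · intro hA
    set a := A 0 0 with ha
    set b := A 0 1 with hb
    set c := A 1 0 with hc
    set d := A 1 1 with hd
    have hAe := Matrix.ext_iff.mpr hA
    have h00 := hAe 0 0
    have h01 := hAe 0 1
    have h10 := hAe 1 0
    simp [Matrix.mul_apply, Fin.sum_univ_two] at h00 h01 h10
    -- h00 : a*e + b*g = e*a + f*c, h01 : a*f + b*h = e*b + f*d, h10 : c*e + d*g = g*a + h*c
    have r1 : b * g' = c * f' := by
      apply mul_left_cancel₀ hm0
      have : b * g = f * c := by linear_combination h00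
      calc m * (b * g') = b * g := by rw [hg']; ring
        _ = f * c := this
        _ = m * (c * f') := by rw [hf']; ring
    have r2 : f' * (a - d) = e' * b := by
      apply mul_left_cancel₀ hm0
      calc m * (f' * (a - d)) = f * (a - d) := by rw [hf']; ring
        _ = (e - h) * b := by linear_combination h01
        _ = m * (e' * b) := by rw [he']; ring
    have r3 : e' * c = g' * (a - d) := by
      apply mul_left_cancel₀ hm0
      calc m * (e' * c) = (e - h) * c := by rw [he']; ring
        _ = g * (a - d) := by linear_combination h10
        _ = m * (g' * (a - d)) := by rw [hg']; ring
    obtain ⟨w, hw1, hw2, hw3⟩ : ∃ w, a - d = e' * w ∧ b = f' * w ∧ c = g' * w := by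
      rcases hne with hh | hh | hh
      · have he'0 : e' ≠ 0 := fun h0 => hh (by rw [he', h0, mul_zero])
        obtain ⟨w, hw⟩ : e' ∣ a - d :=
          dvd_of_cop e' f' g' (a - d) hcop ⟨b, r2⟩ ⟨c, r3.symm⟩
        refine ⟨w, hw, mul_left_cancel₀ he'0 ?_, mul_left_cancel₀ he'0 ?_⟩
        · rw [← r2, hw]; ring
        · rw [r3, hw]; ring
      · have hf'0 : f' ≠ 0 := fun h0 => hh (by rw [hf', h0, mul_zero])
        obtain ⟨w, hw⟩ : f' ∣ b :=
          dvd_of_cop f' e' g' b (fun d h1 h2 h3 => hcop d h2 h1 h3)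
            ⟨a - d, r2.symm⟩ ⟨c, by linear_combination r1⟩
        refine ⟨w, mul_left_cancel₀ hf'0 ?_, by rw [hw], mul_left_cancel₀ hf'0 ?_⟩
        · rw [r2, hw]; ring
        · rw [← mul_comm c f', ← r1, hw]; ring
      · have hg'0 : g' ≠ 0 := fun h0 => hh (by rw [hg', h0, mul_zero])
        obtain ⟨w, hw⟩ : g' ∣ c :=
          dvd_of_cop g' e' f' c (fun d h1 h2 h3 => hcop d h2 h3 h1)
            ⟨a - d, r3⟩ ⟨b, by linear_combination - r1⟩
        refine ⟨w, mul_left_cancel₀ hg'0 ?_, mul_left_cancel₀ hg'0 ?_, by rw [hw]⟩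
        · rw [← r3, hw]; ring
        · rw [mul_comm g' b, r1, hw]; ring
    refine ⟨d, w, ⟨e' * w, by rw [he']; ring⟩, ⟨f' * w, by rw [hf']; ring⟩,
      ⟨g' * w, by rw [hg']; ring⟩, ?_⟩
    have hAeq : A = !![e' * w + d, f' * w; g' * w, d] := by
      ext i j
      fin_cases i <;> fin_cases j <;> simp
      · linear_combination hw1
      · linear_combination hw2
      · linear_combination hw3
      · rfl
    rw [hAeq]
    ext i j
    fin_cases i <;> fin_cases j <;>
      simp [Matrix.map_apply, Matrix.one_apply, he', hf', hg', smul_eq_mul] <;>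
      field_simp <;> ring
  · rintro ⟨v, w, -, -, -, hK⟩
    have hmap : (A * !![e, f; g, h]).map φ = (!![e, f; g, h] * A).map φ := by
      rw [Matrix.map_mul, Matrix.map_mul, hK]
      ext i j
      fin_cases i <;> fin_cases j <;>
        simp [Matrix.mul_apply, Fin.sum_univ_two, Matrix.map_apply, Matrix.one_apply,
          map_sub] <;> ring
    ext i j
    apply φinj
    have := Matrix.ext_iff.mpr hmap i j
    simpa [Matrix.map_apply] using this
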